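/- Let l > 0, let p ∈ C¹([0,l]) with p(x) > 0 on [0,l], and let q ∈ C([0,l]) with q(x) ≥ 0 on [0,l]. Let (X_j)_{j≥1} ⊂ C²([0,l]) and (λ_j)_{j≥1} be pairwise distinct eigenvalues such that (p X_j′)′ − q X_j = −λ_j X_j on [0,l], X_j(0) = X_j(l) = 0, and ∫_0^l X_j(x) X_k(x) dx = δ_{jk} (orthonormality). Let φ ∈ C¹([0,l]) with φ(0) = φ(l) = 0, and set φ_j = ∫_0^l φ(x) X_j(x) dx. Then the series ∑_{j=1}^∞ λ_j φ_j² converges and ∑_{j=1}^∞ λ_j φ_j² ≤ ∫_0^l [ p(x) (φ′(x))² + q(x) φ(x)² ] dx. -/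

import Mathlib

open MeasureTheory Set

/-- The Dirichlet-type energy functional `J(Y) = ∫_0^l [p (Y′)² + q Y²] dx`. -/
noncomputable def energyJ (l : ℝ) (p q Y : ℝ → ℝ) : ℝ :=
  ∫ x in (0:ℝ)..l, (p x * deriv Y x ^ 2 + q x * Y x ^ 2)

lemma sl_ibp (l : ℝ) (hl : 0 < l) (p q : ℝ → ℝ)
    (hp_diff : ∀ x ∈ Icc 0 l, DifferentiableAt ℝ p x)
    (hq_cont : ContinuousOn q (Icc 0 l))
    (Y v : ℝ → ℝ) (lam : ℝ)
    (hY_diff : ∀ x ∈ Icc 0 l, DifferentiableAt ℝ Y x)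
    (hY_diff2 : ∀ x ∈ Icc 0 l, DifferentiableAt ℝ (deriv Y) x)
    (heig : ∀ x ∈ Icc 0 l, deriv (fun y => p y * deriv Y y) x - q x * Y x = -lam * Y x)
    (hv_diff : ∀ x ∈ Icc 0 l, DifferentiableAt ℝ v x)
    (hv_cont : ContinuousOn (deriv v) (Icc 0 l))
    (hv0 : v 0 = 0) (hvl : v l = 0) :
    (∫ x in (0:ℝ)..l, (p x * deriv Y x * deriv v x + q x * Y x * v x))
      = lam * ∫ x in (0:ℝ)..l, Y x * v x := by
  have hIcc : uIcc (0:ℝ) l = Icc 0 l := uIcc_of_le hl.le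
  have hcont_int : ∀ f : ℝ → ℝ, ContinuousOn f (Icc 0 l) →
      IntervalIntegrable f volume 0 l := by
    intro f hf; apply ContinuousOn.intervalIntegrable; rwa [hIcc]
  have hpc : ContinuousOn p (Icc 0 l) := fun x hx =>
    (hp_diff x hx).continuousAt.continuousWithinAt
  have hYc : ContinuousOn Y (Icc 0 l) := fun x hx =>
    (hY_diff x hx).continuousAt.continuousWithinAt
  have hY'c : ContinuousOn (deriv Y) (Icc 0 l) := fun x hx =>
    (hY_diff2 x hx).continuousAt.continuousWithinAt
  have hvc : ContinuousOn v (Icc 0 l) := fun x hx =>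
    (hv_diff x hx).continuousAt.continuousWithinAt
  set w : ℝ → ℝ := fun y => p y * deriv Y y with hwdef
  have hwd : ∀ x ∈ Icc 0 l, DifferentiableAt ℝ w x := fun x hx =>
    (hp_diff x hx).mul (hY_diff2 x hx)
  have hw'eq : ∀ x ∈ Icc 0 l, deriv w x = q x * Y x - lam * Y x := by
    intro x hx; have h := heig x hx; rw [hwdef]; linarith
  have hw'c : ContinuousOn (deriv w) (Icc 0 l) := by
    apply ContinuousOn.congr (f := fun x => q x * Y x - lam * Y x)
    · exact (hq_cont.mul hYc).sub (continuousOn_const.mul hYc)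
    · exact hw'eq
  have hibp := intervalIntegral.integral_mul_deriv_eq_deriv_mul
      (u := w) (v := v) (u' := deriv w) (v' := deriv v)
      (fun x hx => (hwd x (hIcc ▸ hx)).hasDerivAt)
      (fun x hx => (hv_diff x (hIcc ▸ hx)).hasDerivAt)
      (hcont_int _ hw'c) (hcont_int _ hv_cont)
  have hibp' : (∫ x in (0:ℝ)..l, w x * deriv v x)
      = -∫ x in (0:ℝ)..l, deriv w x * v x := by
    rw [hibp, hvl, hv0]; ring
  have hint1 : IntervalIntegrable (fun x => w x * deriv v x) volume 0 l :=
    hcont_int _ ((hpc.mul hY'c).mul hv_cont)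
  have hint2 : IntervalIntegrable (fun x => q x * Y x * v x) volume 0 l :=
    hcont_int _ ((hq_cont.mul hYc).mul hvc)
  have hint3 : IntervalIntegrable (fun x => deriv w x * v x) volume 0 l :=
    hcont_int _ (hw'c.mul hvc)
  have h1 : (∫ x in (0:ℝ)..l, (p x * deriv Y x * deriv v x + q x * Y x * v x))
      = (∫ x in (0:ℝ)..l, w x * deriv v x) + ∫ x in (0:ℝ)..l, q x * Y x * v x :=
    intervalIntegral.integral_add hint1 hint2
  have h2 : (∫ x in (0:ℝ)..l, q x * Y x * v x) - (∫ x in (0:ℝ)..l, deriv w x * v x)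
      = ∫ x in (0:ℝ)..l, lam * (Y x * v x) := by
    rw [← intervalIntegral.integral_sub hint2 hint3]
    apply intervalIntegral.integral_congr
    intro x hx
    rw [hIcc] at hx
    have h := hw'eq x hx
    simp only []
    rw [h]; ring
  have h3 : (∫ x in (0:ℝ)..l, lam * (Y x * v x)) = lam * ∫ x in (0:ℝ)..l, Y x * v x :=
    intervalIntegral.integral_const_mul _ _
  rw [h1, hibp']
  linarith

/-- Bessel-type inequality: for an orthonormal family of Sturm–Liouville eigenfunctions
`(X_j)` with pairwise distinct eigenvalues `(λ_j)` and `φ ∈ C¹([0,l])` vanishing at the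
endpoints, with Fourier coefficients `φ_j = ∫_0^l φ X_j`, the series `∑ λ_j φ_j²`
converges and `∑_{j=1}^∞ λ_j φ_j² ≤ ∫_0^l [p (φ′)² + q φ²] dx`. -/
theorem bessel_inequality_eigenvalues (l : ℝ) (hl : 0 < l)
    (p q φ : ℝ → ℝ) (X : ℕ → ℝ → ℝ) (lam : ℕ → ℝ)
    (hp_diff : ∀ x ∈ Icc 0 l, DifferentiableAt ℝ p x)
    (hp_cont : ContinuousOn (deriv p) (Icc 0 l))
    (hp_pos : ∀ x ∈ Icc 0 l, 0 < p x)
    (hq_cont : ContinuousOn q (Icc 0 l))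
    (hq_nonneg : ∀ x ∈ Icc 0 l, 0 ≤ q x)
    (hX_diff : ∀ j, ∀ x ∈ Icc 0 l, DifferentiableAt ℝ (X j) x)
    (hX_diff2 : ∀ j, ∀ x ∈ Icc 0 l, DifferentiableAt ℝ (deriv (X j)) x)
    (hX_cont2 : ∀ j, ContinuousOn (deriv (deriv (X j))) (Icc 0 l))
    (heig : ∀ j, ∀ x ∈ Icc 0 l,
      deriv (fun y => p y * deriv (X j) y) x - q x * X j x = -lam j * X j x)
    (hbc : ∀ j, X j 0 = 0 ∧ X j l = 0)
    (hdistinct : Function.Injective lam)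
    (horth : ∀ j k, (∫ x in (0:ℝ)..l, X j x * X k x) = if j = k then 1 else 0)
    (hφ_diff : ∀ x ∈ Icc 0 l, DifferentiableAt ℝ φ x)
    (hφ_cont : ContinuousOn (deriv φ) (Icc 0 l))
    (hφ0 : φ 0 = 0) (hφl : φ l = 0) :
    Summable (fun j => lam j * (∫ z in (0:ℝ)..l, φ z * X j z) ^ 2) ∧
      ∑' j : ℕ, lam j * (∫ z in (0:ℝ)..l, φ z * X j z) ^ 2 ≤ energyJ l p q φ := by
  have hIcc : uIcc (0:ℝ) l = Icc 0 l := uIcc_of_le hl.le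
  have hcont_int : ∀ f : ℝ → ℝ, ContinuousOn f (Icc 0 l) →
      IntervalIntegrable f volume 0 l := by
    intro f hf; apply ContinuousOn.intervalIntegrable; rwa [hIcc]
  have hpc : ContinuousOn p (Icc 0 l) := fun x hx =>
    (hp_diff x hx).continuousAt.continuousWithinAt
  have hφc : ContinuousOn φ (Icc 0 l) := fun x hx =>
    (hφ_diff x hx).continuousAt.continuousWithinAt
  have hXc : ∀ j, ContinuousOn (X j) (Icc 0 l) := fun j x hx =>
    (hX_diff j x hx).continuousAt.continuousWithinAt
  have hX'c : ∀ j, ContinuousOn (deriv (X j)) (Icc 0 l) := fun j x hx =>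
    (hX_diff2 j x hx).continuousAt.continuousWithinAt
  have hEcont : ∀ (u v : ℝ → ℝ), ContinuousOn u (Icc 0 l) → ContinuousOn (deriv u) (Icc 0 l) →
      ContinuousOn v (Icc 0 l) → ContinuousOn (deriv v) (Icc 0 l) →
      ContinuousOn (fun x => p x * deriv u x * deriv v x + q x * u x * v x) (Icc 0 l) :=
    fun u v hu hu' hv hv' => ((hpc.mul hu').mul hv').add ((hq_cont.mul hu).mul hv)
  set c : ℕ → ℝ := fun j => ∫ z in (0:ℝ)..l, φ z * X j z with hcdef
  have hBXX : ∀ j, (∫ x in (0:ℝ)..l,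
      (p x * deriv (X j) x * deriv (X j) x + q x * X j x * X j x)) = lam j := by
    intro j
    rw [sl_ibp l hl p q hp_diff hq_cont (X j) (X j) (lam j) (hX_diff j) (hX_diff2 j) (heig j)
      (hX_diff j) (hX'c j) (hbc j).1 (hbc j).2, horth j j]
    simp
  have hlam_nonneg : ∀ j, 0 ≤ lam j := by
    intro j
    rw [← hBXX j]
    apply intervalIntegral.integral_nonneg hl.le
    intro x hx
    nlinarith [hp_pos x hx, hq_nonneg x hx, mul_self_nonneg (deriv (X j) x),
      mul_self_nonneg (X j x)]
  have hterm : ∀ j, 0 ≤ lam j * c j ^ 2 := fun j => mul_nonneg (hlam_nonneg j) (sq_nonneg _)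
  have main : ∀ N : ℕ, ∑ j ∈ Finset.range N, lam j * c j ^ 2 ≤ energyJ l p q φ := by
    intro N
    set ψ : ℝ → ℝ := fun x => φ x - ∑ j ∈ Finset.range N, c j * X j x with hψdef
    have hψ0 : ψ 0 = 0 := by simp [hψdef, hφ0, fun j => (hbc j).1]
    have hψl : ψ l = 0 := by simp [hψdef, hφl, fun j => (hbc j).2]
    have hψ'has : ∀ x ∈ Icc 0 l,
        HasDerivAt ψ (deriv φ x - ∑ j ∈ Finset.range N, c j * deriv (X j) x) x := by
      intro x hx
      rw [hψdef]
      exact (hφ_diff x hx).hasDerivAt.sub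
        (HasDerivAt.fun_sum fun j _ => HasDerivAt.const_mul (c j) (hX_diff j x hx).hasDerivAt)
    have hψ_diff : ∀ x ∈ Icc 0 l, DifferentiableAt ℝ ψ x := fun x hx =>
      (hψ'has x hx).differentiableAt
    have hψ'eq : ∀ x ∈ Icc 0 l,
        deriv ψ x = deriv φ x - ∑ j ∈ Finset.range N, c j * deriv (X j) x :=
      fun x hx => (hψ'has x hx).deriv
    have hψc : ContinuousOn ψ (Icc 0 l) := fun x hx =>
      (hψ_diff x hx).continuousAt.continuousWithinAt
    have hψ'c : ContinuousOn (deriv ψ) (Icc 0 l) := by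
      apply ContinuousOn.congr
        (f := fun x => deriv φ x - ∑ j ∈ Finset.range N, c j * deriv (X j) x)
      · exact hφ_cont.sub (continuousOn_finset_sum _ fun j _ => continuousOn_const.mul (hX'c j))
      · exact hψ'eq
    have hsum_expand : ∀ (a b x : ℝ),
        ∑ j ∈ Finset.range N, c j * (p x * deriv (X j) x * a + q x * X j x * b)
          = p x * (∑ j ∈ Finset.range N, c j * deriv (X j) x) * a
            + q x * (∑ j ∈ Finset.range N, c j * X j x) * b := by
      intro a b x
      rw [Finset.mul_sum, Finset.sum_mul, Finset.mul_sum, Finset.sum_mul,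
        ← Finset.sum_add_distrib]
      exact Finset.sum_congr rfl fun j _ => by ring
    -- B(X j, ψ) = 0 for j < N
    have hXψ : ∀ j ∈ Finset.range N,
        (∫ x in (0:ℝ)..l, (p x * deriv (X j) x * deriv ψ x + q x * X j x * ψ x)) = 0 := by
      intro j hj
      rw [sl_ibp l hl p q hp_diff hq_cont (X j) ψ (lam j) (hX_diff j) (hX_diff2 j) (heig j)
        hψ_diff hψ'c hψ0 hψl]
      have e1 : (∫ x in (0:ℝ)..l, X j x * ψ x)
          = ∫ x in (0:ℝ)..l, (X j x * φ x - ∑ k ∈ Finset.range N, c k * (X j x * X k x)) := by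
        apply intervalIntegral.integral_congr
        intro x _
        rw [hψdef]
        simp only []
        rw [mul_sub, Finset.mul_sum]
        congr 1
        exact Finset.sum_congr rfl fun k _ => by ring
      have hintA : IntervalIntegrable (fun x => X j x * φ x) volume 0 l :=
        hcont_int _ ((hXc j).mul hφc)
      have hintK : ∀ k ∈ Finset.range N,
          IntervalIntegrable (fun x => c k * (X j x * X k x)) volume 0 l :=
        fun k _ => hcont_int _ (continuousOn_const.mul ((hXc j).mul (hXc k)))
      have hintS : IntervalIntegrable
          (fun x => ∑ k ∈ Finset.range N, c k * (X j x * X k x)) volume 0 l :=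
        hcont_int _ (continuousOn_finset_sum _ fun k _ =>
          continuousOn_const.mul ((hXc j).mul (hXc k)))
      rw [e1, intervalIntegral.integral_sub hintA hintS,
        intervalIntegral.integral_finset_sum hintK]
      have hXφ : (∫ x in (0:ℝ)..l, X j x * φ x) = c j := by
        rw [hcdef]
        simp only []
        apply intervalIntegral.integral_congr
        intro x _; ring
      have hS : ∑ k ∈ Finset.range N, (∫ x in (0:ℝ)..l, c k * (X j x * X k x)) = c j := by
        have step : ∀ k, (∫ x in (0:ℝ)..l, c k * (X j x * X k x))
            = if j = k then c k else 0 := by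
          intro k
          rw [intervalIntegral.integral_const_mul, horth j k]
          split <;> simp
        rw [Finset.sum_congr rfl fun k _ => step k, Finset.sum_ite_eq]
        simp [Finset.mem_range.mp hj]
      rw [hXφ, hS]
      ring
    -- B(φ, ψ) = J - ∑ c_j λ_j c_j
    have hφψ : (∫ x in (0:ℝ)..l, (p x * deriv φ x * deriv ψ x + q x * φ x * ψ x))
        = energyJ l p q φ - ∑ j ∈ Finset.range N, c j * (lam j * c j) := by
      have e1 : (∫ x in (0:ℝ)..l, (p x * deriv φ x * deriv ψ x + q x * φ x * ψ x))
          = ∫ x in (0:ℝ)..l, ((p x * deriv φ x ^ 2 + q x * φ x ^ 2)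
              - ∑ j ∈ Finset.range N,
                  c j * (p x * deriv (X j) x * deriv φ x + q x * X j x * φ x)) := by
        apply intervalIntegral.integral_congr
        intro x hx
        rw [hIcc] at hx
        simp only []
        rw [hsum_expand (deriv φ x) (φ x) x, hψ'eq x hx, hψdef]
        simp only []
        ring
      have hintJ : IntervalIntegrable (fun x => p x * deriv φ x ^ 2 + q x * φ x ^ 2) volume 0 l :=
        hcont_int _ ((hpc.mul (hφ_cont.pow 2)).add (hq_cont.mul (hφc.pow 2)))
      have hintj : ∀ j ∈ Finset.range N, IntervalIntegrable
          (fun x => c j * (p x * deriv (X j) x * deriv φ x + q x * X j x * φ x)) volume 0 l :=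
        fun j _ => hcont_int _ (continuousOn_const.mul
          (hEcont (X j) φ (hXc j) (hX'c j) hφc hφ_cont))
      have hintS : IntervalIntegrable (fun x => ∑ j ∈ Finset.range N,
          c j * (p x * deriv (X j) x * deriv φ x + q x * X j x * φ x)) volume 0 l :=
        hcont_int _ (continuousOn_finset_sum _ fun j _ => continuousOn_const.mul
          (hEcont (X j) φ (hXc j) (hX'c j) hφc hφ_cont))
      rw [e1, intervalIntegral.integral_sub hintJ hintS,
        intervalIntegral.integral_finset_sum hintj]
      unfold energyJ
      congr 1
      apply Finset.sum_congr rfl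
      intro j _
      rw [intervalIntegral.integral_const_mul]
      congr 1
      rw [sl_ibp l hl p q hp_diff hq_cont (X j) φ (lam j) (hX_diff j) (hX_diff2 j) (heig j)
        hφ_diff hφ_cont hφ0 hφl]
      congr 1
      rw [hcdef]
      simp only []
      apply intervalIntegral.integral_congr
      intro x _; ring
    -- B(ψ, ψ) = B(φ, ψ) - ∑ c_j B(X_j, ψ)
    have hψψ : (∫ x in (0:ℝ)..l, (p x * deriv ψ x * deriv ψ x + q x * ψ x * ψ x))
        = (∫ x in (0:ℝ)..l, (p x * deriv φ x * deriv ψ x + q x * φ x * ψ x))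
          - ∑ j ∈ Finset.range N, c j *
              ∫ x in (0:ℝ)..l, (p x * deriv (X j) x * deriv ψ x + q x * X j x * ψ x) := by
      have e1 : (∫ x in (0:ℝ)..l, (p x * deriv ψ x * deriv ψ x + q x * ψ x * ψ x))
          = ∫ x in (0:ℝ)..l, ((p x * deriv φ x * deriv ψ x + q x * φ x * ψ x)
              - ∑ j ∈ Finset.range N,
                  c j * (p x * deriv (X j) x * deriv ψ x + q x * X j x * ψ x)) := by
        apply intervalIntegral.integral_congr
        intro x hx
        rw [hIcc] at hx
        simp only []
        rw [hsum_expand (deriv ψ x) (ψ x) x, hψ'eq x hx]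
        nth_rewrite 1 [hψdef]
        nth_rewrite 3 [hψdef]
        simp only []
        ring
      have hintA : IntervalIntegrable
          (fun x => p x * deriv φ x * deriv ψ x + q x * φ x * ψ x) volume 0 l :=
        hcont_int _ (hEcont φ ψ hφc hφ_cont hψc hψ'c)
      have hintj : ∀ j ∈ Finset.range N, IntervalIntegrable
          (fun x => c j * (p x * deriv (X j) x * deriv ψ x + q x * X j x * ψ x)) volume 0 l :=
        fun j _ => hcont_int _ (continuousOn_const.mul
          (hEcont (X j) ψ (hXc j) (hX'c j) hψc hψ'c))
      have hintS : IntervalIntegrable (fun x => ∑ j ∈ Finset.range N,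
          c j * (p x * deriv (X j) x * deriv ψ x + q x * X j x * ψ x)) volume 0 l :=
        hcont_int _ (continuousOn_finset_sum _ fun j _ => continuousOn_const.mul
          (hEcont (X j) ψ (hXc j) (hX'c j) hψc hψ'c))
      rw [e1, intervalIntegral.integral_sub hintA hintS,
        intervalIntegral.integral_finset_sum hintj]
      congr 1
      exact Finset.sum_congr rfl fun j _ => intervalIntegral.integral_const_mul _ _
    have hnn : 0 ≤ ∫ x in (0:ℝ)..l, (p x * deriv ψ x * deriv ψ x + q x * ψ x * ψ x) := by
      apply intervalIntegral.integral_nonneg hl.le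
      intro x hx
      nlinarith [hp_pos x hx, hq_nonneg x hx, mul_self_nonneg (deriv ψ x), mul_self_nonneg (ψ x)]
    have hzero : ∑ j ∈ Finset.range N, c j *
        (∫ x in (0:ℝ)..l, (p x * deriv (X j) x * deriv ψ x + q x * X j x * ψ x)) = 0 :=
      Finset.sum_eq_zero fun j hj => by rw [hXψ j hj, mul_zero]
    have hsq : ∑ j ∈ Finset.range N, c j * (lam j * c j)
        = ∑ j ∈ Finset.range N, lam j * c j ^ 2 :=
      Finset.sum_congr rfl fun j _ => by ring
    linarith [hψψ, hφψ, hnn, hzero, hsq]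
  simp only [hcdef] at hterm main
  have hsu : Summable (fun j => lam j * (∫ z in (0:ℝ)..l, φ z * X j z) ^ 2) :=
    summable_of_sum_range_le hterm main
  exact ⟨hsu, Summable.tsum_le_of_sum_range_le hsu main⟩
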